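/- Let A be a symmetric positive definite real 3×3 matrix and let ε > 0. For each φ ∈ ℝ let X(φ) := (1/(2ε))·(−φ·I + S(φ)), where S(φ) is the unique positive semidefinite square root of φ²·I + 4ε·A (so X(φ) is the unique positive definite solution of φ·X + ε·X² = A). Then there exists exactly one φ ∈ ℝ such that det X(φ) = 1. -/

import Mathlib

open Matrix

abbrev Mat := Matrix (Fin 3) (Fin 3) ℝ

section Aux

open Real Finset

lemma sqrt_gt_abs {φ c : ℝ} (hc : 0 < c) : |φ| < Real.sqrt (φ^2 + c) := by
  rw [← Real.sqrt_sq_eq_abs]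
  exact Real.sqrt_lt_sqrt (sq_nonneg φ) (by linarith)

lemma h_strictMono {c : ℝ} (hc : 0 < c) :
    StrictMono (fun φ : ℝ => φ + Real.sqrt (φ^2 + c)) := by
  intro φ ψ hlt
  have hφ := sqrt_gt_abs (φ := φ) hc
  have hψ := sqrt_gt_abs (φ := ψ) hc
  have hφ2 : Real.sqrt (φ^2 + c) ^ 2 = φ^2 + c := Real.sq_sqrt (by positivity)
  have hψ2 : Real.sqrt (ψ^2 + c) ^ 2 = ψ^2 + c := Real.sq_sqrt (by positivity)
  have h1 : -φ < Real.sqrt (φ^2 + c) := lt_of_le_of_lt (neg_le_abs φ) hφ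
  have h2 : -ψ < Real.sqrt (ψ^2 + c) := lt_of_le_of_lt (neg_le_abs ψ) hψ
  have hpos : 0 < Real.sqrt (ψ^2 + c) + Real.sqrt (φ^2 + c) := by
    have := abs_nonneg φ; have := abs_nonneg ψ; linarith
  have key : 0 < (ψ - φ) * ((Real.sqrt (ψ^2 + c) + ψ) + (Real.sqrt (φ^2 + c) + φ)) :=
    mul_pos (by linarith) (by linarith)
  simp only
  nlinarith [key, hφ2, hψ2, hpos]

/-- the single-eigenvalue factor -/
noncomputable def gfun (ε a φ : ℝ) : ℝ := (-φ + Real.sqrt (φ^2 + 4*ε*a)) / (2*ε)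

lemma gfun_pos {ε a : ℝ} (hε : 0 < ε) (ha : 0 < a) (φ : ℝ) : 0 < gfun ε a φ := by
  have h := sqrt_gt_abs (φ := φ) (c := 4*ε*a) (by positivity)
  have := le_abs_self φ
  exact div_pos (by linarith) (by linarith)

lemma gfun_eq {ε a : ℝ} (hε : 0 < ε) (ha : 0 < a) (φ : ℝ) :
    gfun ε a φ = (4*ε*a) / (2*ε*(φ + Real.sqrt (φ^2 + 4*ε*a))) := by
  have h := sqrt_gt_abs (φ := φ) (c := 4*ε*a) (by positivity)
  have h1 : -φ ≤ |φ| := neg_le_abs φ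
  have hs : Real.sqrt (φ^2 + 4*ε*a) ^ 2 = φ^2 + 4*ε*a := Real.sq_sqrt (by positivity)
  have hpos : 0 < φ + Real.sqrt (φ^2 + 4*ε*a) := by
    have := le_abs_self φ; linarith
  rw [gfun]
  field_simp
  nlinarith [hs]

lemma gfun_strictAnti {ε a : ℝ} (hε : 0 < ε) (ha : 0 < a) : StrictAnti (gfun ε a) := by
  intro φ ψ hlt
  rw [gfun_eq hε ha, gfun_eq hε ha]
  have hmono := h_strictMono (c := 4*ε*a) (by positivity) hlt
  simp only at hmono
  have hposφ : 0 < φ + Real.sqrt (φ^2 + 4*ε*a) := by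
    have h := sqrt_gt_abs (φ := φ) (c := 4*ε*a) (by positivity)
    have := neg_le_abs φ; linarith
  have h2ε : (0:ℝ) < 2*ε := by linarith
  exact div_lt_div_of_pos_left (by positivity) (mul_pos h2ε hposφ)
    (mul_lt_mul_of_pos_left hmono h2ε)

lemma gfun_continuous (ε a : ℝ) : Continuous (gfun ε a) := by
  unfold gfun
  fun_prop

lemma gfun_le_one {ε a : ℝ} (hε : 0 < ε) (ha : 0 < a) {φ : ℝ} (hφ : 0 < φ) (h : a ≤ φ + ε) :
    gfun ε a φ ≤ 1 := by
  have hs : Real.sqrt (φ^2 + 4*ε*a) ≤ φ + 2*ε := by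
    rw [show φ + 2*ε = Real.sqrt ((φ + 2*ε)^2) from (Real.sqrt_sq (by linarith)).symm]
    exact Real.sqrt_le_sqrt (by nlinarith)
  rw [gfun, div_le_one (by linarith)]
  linarith

lemma gfun_ge_one {ε a : ℝ} (hε : 0 < ε) (ha : 0 < a) : 1 ≤ gfun ε a (-ε) := by
  have hs : ε ≤ Real.sqrt ((-ε)^2 + 4*ε*a) := by
    have h := Real.sqrt_le_sqrt (show ε^2 ≤ (-ε)^2 + 4*ε*a by nlinarith)
    rwa [Real.sqrt_sq hε.le] at h
  rw [gfun, le_div_iff₀ (by linarith)]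
  linarith

lemma scalar_key (ε : ℝ) (hε : 0 < ε) (a : Fin 3 → ℝ) (ha : ∀ i, 0 < a i) :
    ∃! φ : ℝ, ∏ i, gfun ε (a i) φ = 1 := by
  set F : ℝ → ℝ := fun φ => ∏ i, gfun ε (a i) φ with hF
  have hanti : StrictAnti F := by
    intro φ ψ hlt
    exact Finset.prod_lt_prod_of_nonempty (fun i _ => gfun_pos hε (ha i) ψ)
      (fun i _ => gfun_strictAnti hε (ha i) hlt) univ_nonempty
  have hcont : Continuous F := continuous_finset_prod _ fun i _ => gfun_continuous ε (a i)
  set φ₁ : ℝ := a 0 + a 1 + a 2 with hφ₁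
  have hφ₁pos : 0 < φ₁ := by have := ha 0; have := ha 1; have := ha 2; positivity
  have hub : F φ₁ ≤ 1 := by
    apply Finset.prod_le_one (fun i _ => (gfun_pos hε (ha i) φ₁).le)
    intro i _
    apply gfun_le_one hε (ha i) hφ₁pos
    have := ha 0; have := ha 1; have := ha 2
    fin_cases i <;> simp [hφ₁] <;> linarith
  have hlb : 1 ≤ F (-ε) := by
    simp only [hF]
    calc (1:ℝ) = ∏ _i : Fin 3, (1:ℝ) := by simp
    _ ≤ ∏ i, gfun ε (a i) (-ε) :=
        Finset.prod_le_prod (by simp) (fun i _ => gfun_ge_one hε (ha i))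
  have hle : (-ε) ≤ φ₁ := by linarith
  have := intermediate_value_Icc' hle hcont.continuousOn
  obtain ⟨φ, _, hφ⟩ := this ⟨hub, hlb⟩
  exact ⟨φ, hφ, fun ψ hψ => hanti.injective (hψ.trans hφ.symm)⟩

end Aux

/-- For a symmetric positive definite `A` and `ε > 0`, there is exactly one
`φ ∈ ℝ` such that the unique positive definite solution
`X(φ) = (1/(2ε))·(−φ·I + S(φ))` of `φ·X + ε·X² = A` (with `S(φ)` the unique positive
semidefinite square root of `φ²·I + 4ε·A`) satisfies `det X(φ) = 1`. -/
theorem exists_unique_phi (A : Mat) (hA : A.PosDef) (ε : ℝ) (hε : 0 < ε) :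
    ∃! φ : ℝ, ∀ S : Mat, S.PosSemidef → S * S = φ ^ 2 • (1 : Mat) + (4 * ε) • A →
      ((1 / (2 * ε)) • (-(φ • (1 : Mat)) + S)).det = 1 := by
  have hH : A.IsHermitian := hA.1
  set a : Fin 3 → ℝ := hH.eigenvalues with ha_def
  have ha : ∀ i, 0 < a i := fun i => hA.eigenvalues_pos i
  set U : Mat := (hH.eigenvectorUnitary : Mat) with hU_def
  have hU1 : U * star U = 1 := (Matrix.mem_unitaryGroup_iff).mp hH.eigenvectorUnitary.2
  have hU2 : star U * U = 1 := (Matrix.mem_unitaryGroup_iff').mp hH.eigenvectorUnitary.2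
  have hspec : A = U * diagonal a * star U := by
    have := hH.spectral_theorem
    rwa [RCLike.ofReal_real_eq_id, Function.id_comp] at this
  set d : ℝ → Fin 3 → ℝ := fun φ i => Real.sqrt (φ^2 + 4*ε*a i) with hd_def
  set S : ℝ → Mat := fun φ => U * diagonal (d φ) * star U with hS_def
  have hSpsd : ∀ φ, (S φ).PosSemidef := by
    intro φ
    rw [hS_def]
    simp only [Matrix.star_eq_conjTranspose]
    exact Matrix.PosSemidef.mul_mul_conjTranspose_same
      (Matrix.posSemidef_diagonal_iff.mpr fun i => Real.sqrt_nonneg _) U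
  have hSsq : ∀ φ, S φ * S φ = φ ^ 2 • (1 : Mat) + (4 * ε) • A := by
    intro φ
    have e0 : S φ * S φ = U * ((diagonal (d φ) * (star U * U)) * diagonal (d φ)) * star U := by
      rw [hS_def]; simp only [mul_assoc]
    rw [e0, hU2, mul_one, diagonal_mul_diagonal]
    have e1 : (fun i => d φ i * d φ i) = fun i => φ^2 + (4*ε) * a i := by
      funext i
      simp only [hd_def]
      rw [Real.mul_self_sqrt (by have := ha i; positivity)]
    have e2 : diagonal (fun i => d φ i * d φ i)
        = φ^2 • (1 : Mat) + (4*ε) • diagonal a := by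
      rw [e1, smul_one_eq_diagonal, ← diagonal_smul, diagonal_add]
      rfl
    rw [e2]
    simp only [Matrix.mul_add, Matrix.add_mul, Matrix.mul_smul, Matrix.smul_mul, mul_one,
      hU1, ← mul_assoc]
    rw [← hspec]
  have hdet : ∀ φ, ((1 / (2 * ε)) • (-(φ • (1 : Mat)) + S φ)).det = ∏ i, gfun ε (a i) φ := by
    intro φ
    have h1 : -(φ • (1 : Mat)) = U * diagonal (fun _ : Fin 3 => -φ) * star U := by
      rw [show diagonal (fun _ : Fin 3 => -φ) = (-φ) • (1 : Mat) from smul_one_eq_diagonal _ |>.symm]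
      simp [Matrix.mul_smul, Matrix.smul_mul, hU1]
    have comb : -(φ • (1 : Mat)) + S φ = U * diagonal (fun i => -φ + d φ i) * star U := by
      rw [h1, hS_def]
      simp only [← Matrix.add_mul, ← Matrix.mul_add, diagonal_add]
    have hX : (1 / (2 * ε)) • (-(φ • (1 : Mat)) + S φ)
        = U * diagonal (fun i => gfun ε (a i) φ) * star U := by
      rw [comb, ← Matrix.smul_mul, ← Matrix.mul_smul, ← diagonal_smul]
      have he : ((1/(2*ε)) • fun i => -φ + d φ i) = fun i => gfun ε (a i) φ := by
        funext i
        show (1/(2*ε)) * (-φ + d φ i) = gfun ε (a i) φ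
        rw [gfun]; ring
      rw [he]
    rw [hX, det_mul, det_mul, mul_comm U.det, mul_assoc, ← det_mul, hU1, det_one, mul_one,
      det_diagonal]
  obtain ⟨φ₀, h0, huniq⟩ := scalar_key ε hε a ha
  refine ⟨φ₀, ?_, ?_⟩
  · intro S' hS' hsq
    have hM : (φ₀ ^ 2 • (1 : Mat) + (4 * ε) • A).PosSemidef := by
      rw [← hSsq φ₀, ← pow_two]; exact (hSpsd φ₀).pow 2
    open scoped MatrixOrder in
    have e1 : S' = CFC.sqrt (φ₀ ^ 2 • (1 : Mat) + (4 * ε) • A) := by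
      exact (CFC.sqrt_unique hsq hS'.nonneg).symm
    open scoped MatrixOrder in
    have e2 : S φ₀ = CFC.sqrt (φ₀ ^ 2 • (1 : Mat) + (4 * ε) • A) := by
      exact (CFC.sqrt_unique (hSsq φ₀) (hSpsd φ₀).nonneg).symm
    rw [e1, ← e2, hdet φ₀]
    exact h0
  · intro ψ hψ
    refine huniq ψ ?_
    show ∏ i, gfun ε (a i) ψ = 1
    rw [← hdet ψ]
    exact hψ (S ψ) (hSpsd ψ) (hSsq ψ)
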